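/- Let ν, κ, p > 0 with ν²/(4κ) > 1. Let x_ε be the unique positive zero of g_ε(x) = 1 - 4p/(ν²x) - (4κ/ν²)·(1-e^{-ε²x})/(ε²x). Then x_ε converges to 4p/(ν² - 4κ) as ε → 0. -/
import Mathlib

lemma aux_hasDeriv (t : ℝ) : HasDerivAt (fun t : ℝ => 1 - t + t ^ 2 / 2 - Real.exp (-t))
    (-1 + t - Real.exp (-t) * (-1)) t := by
  have h : HasDerivAt (fun t : ℝ => 1 - t + t ^ 2 / 2 - Real.exp (-t))
      (-1 + (↑2 * t ^ 1) / 2 - Real.exp (-t) * (-1)) t :=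
    (((hasDerivAt_id t).const_sub 1).add ((hasDerivAt_pow 2 t).div_const 2)).sub
      ((Real.hasDerivAt_exp (-t)).comp t ((hasDerivAt_id t).neg))
  convert h using 1
  push_cast
  ring

lemma aux_exp_bound (y : ℝ) (hy : 0 ≤ y) : Real.exp (-y) ≤ 1 - y + y ^ 2 / 2 := by
  have hmono : MonotoneOn (fun t : ℝ => 1 - t + t ^ 2 / 2 - Real.exp (-t)) (Set.Ici 0) := by
    apply monotoneOn_of_deriv_nonneg (convex_Ici 0)
    · fun_prop
    · intro t _
      exact (aux_hasDeriv t).differentiableAt.differentiableWithinAt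
    · intro t ht
      rw [(aux_hasDeriv t).deriv]
      have ht0 : 0 ≤ t := le_of_lt (by simpa using ht)
      have := Real.add_one_le_exp (-t)
      nlinarith
  have := hmono (Set.self_mem_Ici) (Set.mem_Ici.mpr hy) hy
  norm_num at this
  linarith

theorem x_eps_limit (ν κ p : ℝ) (hν : 0 < ν) (hκ : 0 < κ) (hp : 0 < p)
    (hM : 1 < ν ^ 2 / (4 * κ)) (xe : ℝ → ℝ)
    (hxe : ∀ ε : ℝ, 0 < ε → 0 < xe ε ∧
      1 - 4 * p / (ν ^ 2 * xe ε)
        - (4 * κ / ν ^ 2) * ((1 - Real.exp (-(ε ^ 2 * xe ε))) / (ε ^ 2 * xe ε)) = 0) :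
    Filter.Tendsto xe (nhdsWithin 0 (Set.Ioi 0)) (nhds (4 * p / (ν ^ 2 - 4 * κ))) := by
  have h4κ : (0:ℝ) < 4 * κ := by linarith
  have hD : 0 < ν ^ 2 - 4 * κ := by
    have := (one_lt_div h4κ).mp hM; linarith
  set D := ν ^ 2 - 4 * κ with hDdef
  set L := 4 * p / D with hLdef
  have hL : 0 < L := div_pos (by linarith) hD
  have hν2 : 0 < ν ^ 2 := by positivity
  have key : ∀ ε : ℝ, 0 < ε → 4 * p / (D + 2 * κ * ε ^ 2 * L) ≤ xe ε ∧ xe ε ≤ L := by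
    intro ε hε
    obtain ⟨hx, heq⟩ := hxe ε hε
    set x := xe ε with hxdef
    set y := ε ^ 2 * x with hydef
    have hy0 : 0 < y := by positivity
    set φ := (1 - Real.exp (-y)) / y with hφdef
    have hφ1 : φ ≤ 1 := by
      rw [hφdef, div_le_one hy0]
      have := Real.add_one_le_exp (-y)
      linarith
    have hφlow : 1 - y / 2 ≤ φ := by
      rw [hφdef, le_div_iff₀ hy0]
      have := aux_exp_bound y hy0.le
      nlinarith
    have heq2 : x * (ν ^ 2 - 4 * κ * φ) = 4 * p := by
      have hνx : ν ^ 2 * x ≠ 0 := by positivity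
      field_simp at heq
      nlinarith [heq, hx, hν2]
    have hA : D ≤ ν ^ 2 - 4 * κ * φ := by nlinarith
    have hxL : x ≤ L := by
      rw [hLdef, le_div_iff₀ hD]
      nlinarith
    have hden : 0 < D + 2 * κ * ε ^ 2 * L := by positivity
    refine ⟨?_, hxL⟩
    rw [div_le_iff₀ hden]
    have hφlow' : 1 - ε ^ 2 * x / 2 ≤ φ := by rw [← hydef]; exact hφlow
    have hB : 2 * κ * ε ^ 2 * x ≤ 2 * κ * ε ^ 2 * L :=
      mul_le_mul_of_nonneg_left hxL (by positivity)
    have hAup : ν ^ 2 - 4 * κ * φ ≤ D + 2 * κ * ε ^ 2 * L := by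
      nlinarith [mul_le_mul_of_nonneg_left hφlow' (by positivity : (0:ℝ) ≤ 4 * κ)]
    nlinarith
  have hlowT : Filter.Tendsto (fun ε : ℝ => 4 * p / (D + 2 * κ * ε ^ 2 * L))
      (nhdsWithin 0 (Set.Ioi 0)) (nhds L) := by
    have hden : Filter.Tendsto (fun ε : ℝ => D + 2 * κ * ε ^ 2 * L) (nhds 0) (nhds D) := by
      have hc : Continuous fun ε : ℝ => D + 2 * κ * ε ^ 2 * L := by fun_prop
      have := hc.tendsto 0
      simpa using this
    have := (tendsto_const_nhds (x := 4 * p)).div hden hD.ne'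
    exact (this.mono_left nhdsWithin_le_nhds)
  refine tendsto_of_tendsto_of_tendsto_of_le_of_le' hlowT tendsto_const_nhds ?_ ?_
  · exact eventually_nhdsWithin_of_forall fun ε hε => (key ε hε).1
  · exact eventually_nhdsWithin_of_forall fun ε hε => (key ε hε).2
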